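/- Local convergence to a rotating periodic wave (Corollary 4.3): let η₊, η₋ ∈ (−1/√3, 1/√3) with η₊ ≠ η₋, let η̃ be the mixing profile, Ñ(ξ) = η₋ξ + ∫_{−∞}^ξ [η̃(s) − η₋] ds, Ũ(t,x) = √(1 − η̃(x/√t)²)·exp(i·√t·Ñ(x/√t)) for t > 0, η* = η̃(0), and φ* = Ñ(0). Let t₀ > 0, ν ∈ (0, 1), and suppose u : [0,∞) × ℝ → ℂ satisfies sup_{x ∈ ℝ} |u(t,x) − Ũ(t₀+t, x)| ≤ C₀·t^{−ν/4} for all t ≥ 1 and some C₀ > 0. Then for every x₀ > 0 there exists C > 0 such that for all t ≥ 1: sup_{|x| ≤ x₀} |u(t,x) − √(1 − η*²)·exp(i·(√t·φ* + η*·x))| ≤ C·t^{−ν/4}. -/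

import Mathlib

noncomputable section

open Real Filter MeasureTheory Set

/-- The coefficient `a(η) = (1 - 3η²)/(1 - η²)`. -/
def aGL (η : ℝ) : ℝ := (1 - 3 * η ^ 2) / (1 - η ^ 2)

/-- The primitive `A(η) = ∫₀^η a(s) ds`. -/
def AGL (η : ℝ) : ℝ := ∫ s in (0:ℝ)..η, aGL s

/-- A mixing profile for boundary values `ηp` (at `+∞`) and `ηm` (at `-∞`). -/
def IsMixingProfile (ηp ηm : ℝ) (e : ℝ → ℝ) : Prop :=
  ContDiff ℝ 2 e ∧
  (∀ ξ, e ξ ∈ Set.Ioo (-(1 / Real.sqrt 3)) (1 / Real.sqrt 3)) ∧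
  (∀ ξ, deriv (deriv (fun x => AGL (e x))) ξ + ξ / 2 * deriv e ξ = 0) ∧
  Filter.Tendsto e Filter.atTop (nhds ηp) ∧
  Filter.Tendsto e Filter.atBot (nhds ηm)
/-- The antiderivative `Ñ(ξ) = η₋ ξ + ∫_{-∞}^ξ (η̃(s) - η₋) ds`. -/
def NGL (e : ℝ → ℝ) (ηm : ℝ) (ξ : ℝ) : ℝ :=
  ηm * ξ + ∫ s in Set.Iic ξ, (e s - ηm)

/-- The mixing profile solution
`Ũ(t,x) = √(1 - η̃(x/√t)²) exp(i √t Ñ(x/√t))`. -/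
def Utilde (e : ℝ → ℝ) (ηm : ℝ) (t x : ℝ) : ℂ :=
  ((Real.sqrt (1 - e (x / Real.sqrt t) ^ 2) : ℝ) : ℂ)
    * Complex.exp (Complex.I
        * ((Real.sqrt t * NGL e ηm (x / Real.sqrt t) : ℝ) : ℂ))


lemma contOn_aGL : ContinuousOn aGL (Set.Ioo (-1:ℝ) 1) := by
  apply ContinuousOn.div (by fun_prop) (by fun_prop)
  intro x hx; obtain ⟨h1, h2⟩ := hx; nlinarith

lemma hasDerivAt_AGL {y : ℝ} (hy : y ^ 2 < 1) : HasDerivAt AGL (aGL y) y := by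
  have hy' : y ∈ Set.Ioo (-1:ℝ) 1 := by constructor <;> nlinarith
  have hsub : Set.uIcc (0:ℝ) y ⊆ Set.Ioo (-1:ℝ) 1 := by
    intro z hz
    rcases le_total 0 y with h | h
    · rw [Set.uIcc_of_le h] at hz; exact ⟨by nlinarith [hz.1], by nlinarith [hz.2, hy'.2]⟩
    · rw [Set.uIcc_of_ge h] at hz; exact ⟨by nlinarith [hz.1, hy'.1], by nlinarith [hz.2]⟩
  exact intervalIntegral.integral_hasDerivAt_right
    ((contOn_aGL.mono hsub).intervalIntegrable)
    (contOn_aGL.stronglyMeasurableAtFilter isOpen_Ioo _ hy')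
    (contOn_aGL.continuousAt (isOpen_Ioo.mem_nhds hy'))

lemma contDiffOn_AGL : ContDiffOn ℝ 2 AGL (Set.Ioo (-1:ℝ) 1) := by
  rw [show (2 : WithTop ℕ∞) = 1 + 1 by norm_num,
    contDiffOn_succ_iff_deriv_of_isOpen isOpen_Ioo]
  refine ⟨fun y hy => (hasDerivAt_AGL (by nlinarith [hy.1, hy.2])).differentiableAt.differentiableWithinAt, by simp, ?_⟩
  have haGL : ContDiffOn ℝ 1 aGL (Set.Ioo (-1:ℝ) 1) := by
    apply ContDiffOn.div (by fun_prop) (by fun_prop)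
    intro x hx; obtain ⟨h1, h2⟩ := hx; nlinarith
  exact haGL.congr fun y hy => (hasDerivAt_AGL (by nlinarith [hy.1, hy.2])).deriv

lemma norm_cexp_sub_cexp (a b : ℝ) :
    ‖Complex.exp (Complex.I * (a:ℂ)) - Complex.exp (Complex.I * (b:ℂ))‖ ≤ |a - b| := by
  have key : ∀ c : ℝ, ‖Complex.exp (Complex.I * (c:ℂ)) - 1‖ ≤ |c| := by
    intro c
    have h1 : Complex.exp (Complex.I * (c:ℂ)) - 1
        = ⟨Real.cos c - 1, Real.sin c⟩ := by
      rw [mul_comm, Complex.exp_mul_I]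
      apply Complex.ext <;> simp [Complex.cos_ofReal_re, Complex.sin_ofReal_re]
    have h2 : ‖Complex.exp (Complex.I * (c:ℂ)) - 1‖ ^ 2 = 2 - 2 * Real.cos c := by
      rw [h1, Complex.sq_norm, Complex.normSq_mk]
      nlinarith [Real.sin_sq_add_cos_sq c]
    have h3 : 2 - 2 * Real.cos c ≤ c ^ 2 := by
      nlinarith [Real.one_sub_sq_div_two_le_cos (x := c)]
    calc ‖Complex.exp (Complex.I * (c:ℂ)) - 1‖
        = Real.sqrt (‖Complex.exp (Complex.I * (c:ℂ)) - 1‖ ^ 2) := by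
          rw [Real.sqrt_sq (norm_nonneg _)]
      _ ≤ Real.sqrt (c ^ 2) := Real.sqrt_le_sqrt (by rw [h2]; linarith)
      _ = |c| := Real.sqrt_sq_eq_abs c
  have h4 : Complex.exp (Complex.I * (a:ℂ)) - Complex.exp (Complex.I * (b:ℂ))
      = Complex.exp (Complex.I * (b:ℂ)) * (Complex.exp (Complex.I * ((a-b:ℝ):ℂ)) - 1) := by
    rw [mul_sub, mul_one, ← Complex.exp_add]
    push_cast; ring_nf
  rw [h4, norm_mul]
  have h5 : ‖Complex.exp (Complex.I * (b:ℂ))‖ = 1 := by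
    rw [Complex.norm_exp]; simp
  rw [h5, one_mul]; exact key _

lemma sqrt_diff_le {a b : ℝ} (ha : 1/4 ≤ a) (hb : 1/4 ≤ b) :
    |Real.sqrt a - Real.sqrt b| ≤ |a - b| := by
  have h2 : (1:ℝ)/2 ≤ Real.sqrt a := by
    rw [show (1:ℝ)/2 = Real.sqrt (1/4) by
      rw [show (1:ℝ)/4 = (1/2)^2 by norm_num, Real.sqrt_sq]; norm_num]
    exact Real.sqrt_le_sqrt ha
  have h3 : (1:ℝ)/2 ≤ Real.sqrt b := by
    rw [show (1:ℝ)/2 = Real.sqrt (1/4) by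
      rw [show (1:ℝ)/4 = (1/2)^2 by norm_num, Real.sqrt_sq]; norm_num]
    exact Real.sqrt_le_sqrt hb
  have key : (Real.sqrt a - Real.sqrt b) * (Real.sqrt a + Real.sqrt b) = a - b := by
    have := Real.sq_sqrt (by linarith : (0:ℝ) ≤ a)
    have := Real.sq_sqrt (by linarith : (0:ℝ) ≤ b)
    nlinarith
  calc |Real.sqrt a - Real.sqrt b|
      ≤ |Real.sqrt a - Real.sqrt b| * (Real.sqrt a + Real.sqrt b) := by
        nlinarith [abs_nonneg (Real.sqrt a - Real.sqrt b)]
    _ = |a - b| := by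
        rw [← key, abs_mul, abs_of_nonneg (by linarith : (0:ℝ) ≤ Real.sqrt a + Real.sqrt b)]

lemma sq_bound {y : ℝ} (hy : y ∈ Set.Ioo (-(1 / Real.sqrt 3)) (1 / Real.sqrt 3)) :
    3 * y ^ 2 < 1 := by
  have h3 : Real.sqrt 3 ^ 2 = 3 := Real.sq_sqrt (by norm_num)
  have hpos : 0 < Real.sqrt 3 := Real.sqrt_pos.2 (by norm_num)
  obtain ⟨h1, h2⟩ := hy
  have ha : |y| < 1 / Real.sqrt 3 := abs_lt.2 ⟨h1, h2⟩
  have hm : |y| * Real.sqrt 3 < 1 := by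
    have := mul_lt_mul_of_pos_right ha hpos
    rwa [one_div, inv_mul_cancel₀ (ne_of_gt hpos)] at this
  have h0 : (0:ℝ) ≤ |y| * Real.sqrt 3 := by positivity
  have := sq_abs y
  nlinarith [hm, h0, this, h3, mul_self_nonneg (|y| * Real.sqrt 3)]

lemma profile_decay (ηp ηm : ℝ)
    (hm : ηm ∈ Set.Ioo (-(1 / Real.sqrt 3)) (1 / Real.sqrt 3)) (e : ℝ → ℝ)
    (he : IsMixingProfile ηp ηm e) :
    ∃ K ≥ 0, ∀ ξ ≤ (0:ℝ), |e ξ - ηm| ≤ K * Real.exp ξ := by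
  obtain ⟨he1, he2, he3, he4, he5⟩ := he
  have hsq : ∀ ξ, 3 * (e ξ) ^ 2 < 1 := fun ξ => sq_bound (he2 ξ)
  have hsq1 : ∀ ξ, (e ξ) ^ 2 < 1 := fun ξ => by nlinarith [hsq ξ, sq_nonneg (e ξ)]
  have hmem : ∀ ξ, e ξ ∈ Set.Ioo (-1:ℝ) 1 := fun ξ => by
    constructor <;> nlinarith [hsq1 ξ]
  -- F = AGL ∘ e is C²
  have hF : ContDiff ℝ 2 (fun x => AGL (e x)) :=
    contDiffOn_AGL.comp_contDiff he1 hmem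
  have hediff : Differentiable ℝ e := he1.differentiable (by norm_num)
  -- chain rule
  set v : ℝ → ℝ := fun ξ => aGL (e ξ) * deriv e ξ with hvdef
  have hv : ∀ ξ, HasDerivAt (fun x => AGL (e x)) (v ξ) ξ := fun ξ =>
    (hasDerivAt_AGL (hsq1 ξ)).comp ξ (hediff ξ).hasDerivAt
  have hderivF : deriv (fun x => AGL (e x)) = v := funext fun ξ => (hv ξ).deriv
  have hvC1 : ContDiff ℝ 1 v := by
    have := (contDiff_succ_iff_deriv (n := 1)).1
      (by rw [show ((1:WithTop ℕ∞) + 1) = 2 by norm_num]; exact hF)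
    rw [hderivF] at this
    exact this.2.2
  have hvdiff : Differentiable ℝ v := hvC1.differentiable one_ne_zero
  -- ODE for v
  have hODE : ∀ ξ, deriv v ξ = -(ξ / 2) * deriv e ξ := by
    intro ξ
    have := he3 ξ
    rw [hderivF] at this
    linarith
  -- the integrating factor
  set c : ℝ → ℝ := fun ξ => (-ξ) * (1 - e ξ ^ 2) / (2 * (1 - 3 * e ξ ^ 2)) with hcdef
  have hcnezero : ∀ ξ, (2 * (1 - 3 * e ξ ^ 2)) ≠ 0 := fun ξ => by nlinarith [hsq ξ]
  have hccont : Continuous c := by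
    apply Continuous.div (by fun_prop)
    · fun_prop
    · exact hcnezero
  have hcv : ∀ ξ, deriv v ξ = c ξ * v ξ := by
    intro ξ
    rw [hODE ξ, hvdef]
    simp only [hcdef]
    rw [aGL]
    have h1 : (1 - e ξ ^ 2) ≠ 0 := by nlinarith [hsq1 ξ]
    have h2 : (1 - 3 * e ξ ^ 2) ≠ 0 := by nlinarith [hsq ξ]
    field_simp
    rw [mul_div_assoc, div_self (by rw [mul_comm]; exact h2), mul_one]
  set G : ℝ → ℝ := fun ξ => ∫ s in (0:ℝ)..ξ, c s with hGdef
  have hG : ∀ ξ, HasDerivAt G (c ξ) ξ := fun ξ =>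
    intervalIntegral.integral_hasDerivAt_right (hccont.intervalIntegrable _ _)
      (hccont.stronglyMeasurableAtFilter _ _) hccont.continuousAt
  -- v ξ = v 0 * exp (G ξ)
  have hH : ∀ ξ, HasDerivAt (fun ξ => v ξ * Real.exp (-G ξ)) 0 ξ := by
    intro ξ
    have h1 : HasDerivAt v (deriv v ξ) ξ := (hvdiff ξ).hasDerivAt
    have h2 : HasDerivAt (fun ξ => Real.exp (-G ξ)) (Real.exp (-G ξ) * (-(c ξ))) ξ :=
      ((hG ξ).neg).exp
    have h3 := h1.mul h2
    refine h3.congr_deriv ?_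
    rw [hcv ξ]; ring
  have hsol : ∀ ξ, v ξ = v 0 * Real.exp (G ξ) := by
    intro ξ
    have hconst := is_const_of_deriv_eq_zero
      (fun x => (hH x).differentiableAt) (fun x => (hH x).deriv) ξ 0
    have hG0 : G 0 = 0 := intervalIntegral.integral_same
    rw [hG0, neg_zero, Real.exp_zero, mul_one] at hconst
    have hne' : Real.exp (-G ξ) ≠ 0 := Real.exp_ne_zero _
    rw [← hconst, mul_assoc, ← Real.exp_add, neg_add_cancel, Real.exp_zero, mul_one]
  -- bound on G for ξ ≤ 0
  have hGbound : ∀ ξ ≤ (0:ℝ), G ξ ≤ ξ + 1 := by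
    intro ξ hξ
    have hle : ∀ s ∈ Set.Icc ξ 0, -s/2 ≤ c s := by
      intro s hs
      have h1 : 0 < 1 - 3 * e s ^ 2 := by nlinarith [hsq s]
      have h2 : c s + s / 2 = (-s) * (e s ^ 2) / (1 - 3 * e s ^ 2) := by
        simp only [hcdef]
        rw [div_add_div _ _ (mul_pos two_pos h1).ne' (by norm_num),
          div_eq_div_iff (mul_pos (mul_pos two_pos h1) two_pos).ne' h1.ne']
        ring
      have h3 : 0 ≤ (-s) * (e s ^ 2) / (1 - 3 * e s ^ 2) := by
        apply div_nonneg _ h1.le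
        have : 0 ≤ -s := by linarith [hs.2]
        positivity
      linarith
    have hmono : (∫ s in ξ..0, -s/2) ≤ ∫ s in ξ..0, c s := by
      apply intervalIntegral.integral_mono_on hξ
      · exact (Continuous.intervalIntegrable (by fun_prop) _ _)
      · exact hccont.intervalIntegrable _ _
      · exact hle
    have hval : (∫ s in ξ..0, -s/2) = ξ^2/4 := by
      have : (∫ s in ξ..0, -s/2) = ∫ s in ξ..0, (-(1:ℝ)/2) * s := by
        congr 1; funext s; ring
      rw [this, intervalIntegral.integral_const_mul, integral_id]
      ring
    have hGeq : G ξ = -(∫ s in ξ..0, c s) := by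
      simp only [hGdef]
      exact intervalIntegral.integral_symm ξ 0
    have : G ξ ≤ -(ξ^2/4) := by rw [hGeq]; linarith [hval ▸ hmono]
    nlinarith [sq_nonneg (ξ + 2)]
  have hvbound : ∀ ξ ≤ (0:ℝ), |v ξ| ≤ |v 0| * Real.exp 1 * Real.exp ξ := by
    intro ξ hξ
    rw [hsol ξ, abs_mul, abs_of_pos (Real.exp_pos _), mul_assoc, ← Real.exp_add]
    apply mul_le_mul_of_nonneg_left _ (abs_nonneg _)
    exact Real.exp_le_exp.2 (by linarith [hGbound ξ hξ])
  -- uniform bound on |e| on Iic 0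
  have hs3 : (0:ℝ) < 1 / Real.sqrt 3 := by positivity
  have hmabs : |ηm| < 1 / Real.sqrt 3 := abs_lt.2 ⟨hm.1, hm.2⟩
  set ε : ℝ := (1 / Real.sqrt 3 - |ηm|) / 2 with hεdef
  have hε : 0 < ε := by simp only [hεdef]; linarith
  obtain ⟨R, hR⟩ := Filter.eventually_atBot.1 (he5 (Metric.ball_mem_nhds ηm hε))
  set R' : ℝ := min R 0 with hR'def
  have hR'0 : R' ≤ 0 := min_le_right _ _
  obtain ⟨z, hzmem, hzmax⟩ := isCompact_Icc.exists_isMaxOn (α := ℝ) (s := Set.Icc R' 0)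
    ⟨0, by constructor <;> simp [hR'0]⟩ ((he1.continuous.abs).continuousOn)
  set b : ℝ := max (|ηm| + ε) (|e z|) with hbdef
  have hbub : b < 1 / Real.sqrt 3 := by
    apply max_lt
    · simp only [hεdef]; linarith
    · exact abs_lt.2 ⟨(he2 z).1, (he2 z).2⟩
  have hb0 : 0 ≤ b := le_trans (by positivity) (le_max_left _ _)
  have hb3 : 3 * b ^ 2 < 1 := sq_bound ⟨by linarith, hbub⟩
  have hbbound : ∀ ξ ≤ (0:ℝ), |e ξ| ≤ b := by
    intro ξ hξ
    rcases le_or_gt ξ R' with h | h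
    · have := hR ξ (le_trans h (min_le_left _ _))
      rw [Metric.mem_ball, Real.dist_eq] at this
      calc |e ξ| = |ηm + (e ξ - ηm)| := by ring_nf
        _ ≤ |ηm| + |e ξ - ηm| := abs_add_le _ _
        _ ≤ |ηm| + ε := by linarith
        _ ≤ b := le_max_left _ _
    · exact le_trans (hzmax ⟨h.le, hξ⟩) (le_max_right _ _)
  set am : ℝ := 1 - 3 * b ^ 2 with hamdef
  have ham : 0 < am := by simp only [hamdef]; linarith
  have haGLlow : ∀ ξ ≤ (0:ℝ), am ≤ aGL (e ξ) := by
    intro ξ hξ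
    have hsq' : e ξ ^ 2 ≤ b ^ 2 := by
      have h1 := hbbound ξ hξ
      have h2 := sq_abs (e ξ)
      nlinarith [abs_nonneg (e ξ)]
    rw [aGL, le_div_iff₀ (by nlinarith [hsq1 ξ])]
    nlinarith [sq_nonneg (e ξ)]
  set K : ℝ := |v 0| * Real.exp 1 / am with hKdef
  have hK0 : 0 ≤ K := by positivity
  have heprime : ∀ ξ ≤ (0:ℝ), |deriv e ξ| ≤ K * Real.exp ξ := by
    intro ξ hξ
    have hane : aGL (e ξ) ≠ 0 := by linarith [haGLlow ξ hξ]
    have h1 : deriv e ξ = v ξ / aGL (e ξ) := by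
      rw [hvdef]
      field_simp
    rw [h1, abs_div, abs_of_pos (by linarith [haGLlow ξ hξ] : 0 < aGL (e ξ))]
    calc |v ξ| / aGL (e ξ) ≤ (|v 0| * Real.exp 1 * Real.exp ξ) / am := by
          apply div_le_div₀ (by positivity) (hvbound ξ hξ) ham (haGLlow ξ hξ)
      _ = K * Real.exp ξ := by rw [hKdef]; ring
  -- decay of e - ηm
  refine ⟨K, hK0, fun ξ hξ => ?_⟩
  have hcontderiv : Continuous (deriv e) := by
    have := (contDiff_succ_iff_deriv (n := 1)).1
      (by rw [show ((1:WithTop ℕ∞) + 1) = 2 by norm_num]; exact he1)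
    exact this.2.2.continuous
  have hbound2 : ∀ ζ ≤ ξ, |e ξ - e ζ| ≤ K * Real.exp ξ := by
    intro ζ hζ
    have hftc : e ξ - e ζ = ∫ s in ζ..ξ, deriv e s :=
      (intervalIntegral.integral_deriv_eq_sub (fun x _ => hediff x)
        (hcontderiv.intervalIntegrable _ _)).symm
    have h2 : |∫ s in ζ..ξ, deriv e s| ≤ |∫ s in ζ..ξ, K * Real.exp s| := by
      rw [show |∫ s in ζ..ξ, deriv e s| = ‖∫ s in ζ..ξ, deriv e s‖ from rfl]
      refine (intervalIntegral.norm_integral_le_of_norm_le hζ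
        (ae_of_all _ fun t ht => ?_)
        ((continuous_const.mul Real.continuous_exp).intervalIntegrable _ _)).trans (le_abs_self _)
      rw [Real.norm_eq_abs]
      exact heprime t (le_trans ht.2 hξ)
    have h3 : (∫ s in ζ..ξ, K * Real.exp s) = K * (Real.exp ξ - Real.exp ζ) := by
      rw [intervalIntegral.integral_const_mul, integral_exp]
    rw [hftc]
    calc |∫ s in ζ..ξ, deriv e s| ≤ |∫ s in ζ..ξ, K * Real.exp s| := h2
      _ = K * (Real.exp ξ - Real.exp ζ) := by
          rw [h3, abs_of_nonneg (by nlinarith [Real.exp_le_exp.2 hζ, Real.exp_pos ζ])]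
      _ ≤ K * Real.exp ξ := by nlinarith [Real.exp_pos ζ, hK0]
  have hlim : Tendsto (fun ζ => |e ξ - e ζ|) atBot (nhds |e ξ - ηm|) :=
    (tendsto_const_nhds.sub he5).abs
  exact le_of_tendsto hlim (Filter.eventually_atBot.2 ⟨ξ, hbound2⟩)

lemma profile_integrableOn (ηp ηm : ℝ)
    (hm : ηm ∈ Set.Ioo (-(1 / Real.sqrt 3)) (1 / Real.sqrt 3)) (e : ℝ → ℝ)
    (he : IsMixingProfile ηp ηm e) :
    ∀ ξ : ℝ, IntegrableOn (fun s => e s - ηm) (Set.Iic ξ) := by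
  obtain ⟨K, hK0, hdecay⟩ := profile_decay ηp ηm hm e he
  have hcont : Continuous (fun s => e s - ηm) := he.1.continuous.sub continuous_const
  have h0 : IntegrableOn (fun s => e s - ηm) (Set.Iic 0) := by
    apply Integrable.mono' (g := fun s => K * Real.exp s)
    · exact (integrableOn_exp_Iic 0).const_mul K
    · exact hcont.aestronglyMeasurable.restrict
    · refine (ae_restrict_iff' measurableSet_Iic).2 (ae_of_all _ fun s hs => ?_)
      rw [Real.norm_eq_abs]; exact hdecay s hs
  intro ξ
  rcases le_total ξ 0 with h | h
  · exact h0.mono_set (Set.Iic_subset_Iic.2 h)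
  · rw [← Set.Iic_union_Ioc_eq_Iic h]
    exact h0.union (hcont.integrableOn_Ioc)

set_option maxHeartbeats 1000000 in
/-- Local convergence to a rotating periodic wave (Corollary 4.3). -/
theorem local_convergence_rotating_wave
    (ηp ηm : ℝ)
    (hp : ηp ∈ Set.Ioo (-(1 / Real.sqrt 3)) (1 / Real.sqrt 3))
    (hm : ηm ∈ Set.Ioo (-(1 / Real.sqrt 3)) (1 / Real.sqrt 3))
    (hne : ηp ≠ ηm)
    (e : ℝ → ℝ) (he : IsMixingProfile ηp ηm e)
    (ηstar φstar : ℝ) (hηstar : ηstar = e 0) (hφstar : φstar = NGL e ηm 0)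
    (t₀ : ℝ) (ht₀ : 0 < t₀) (ν : ℝ) (hν : ν ∈ Set.Ioo (0:ℝ) 1)
    (u : ℝ → ℝ → ℂ) (C₀ : ℝ) (hC₀ : 0 < C₀)
    (hu : ∀ t ≥ (1:ℝ), ∀ x : ℝ,
      ‖u t x - Utilde e ηm (t₀ + t) x‖ ≤ C₀ * t ^ (-(ν / 4))) :
    ∀ x₀ > (0:ℝ), ∃ C > (0:ℝ), ∀ t ≥ (1:ℝ), ∀ x : ℝ, |x| ≤ x₀ →
      ‖u t x - ((Real.sqrt (1 - ηstar ^ 2) : ℝ) : ℂ)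
          * Complex.exp (Complex.I
              * ((Real.sqrt t * φstar + ηstar * x : ℝ) : ℂ))‖
        ≤ C * t ^ (-(ν / 4)) := by
  intro x₀ hx₀
  obtain ⟨he1, he2, he3, he4, he5⟩ := id he
  have hsq : ∀ ξ, 3 * (e ξ) ^ 2 < 1 := fun ξ => sq_bound (he2 ξ)
  have hInt := profile_integrableOn ηp ηm hm e he
  set I0 : ℝ := ∫ s in Set.Iic 0, (e s - ηm) with hI0def
  clear_value I0
  have hφ : φstar = I0 := by rw [hφstar, hI0def]; simp [NGL]
  have hNGLeq : ∀ ξ : ℝ, NGL e ηm ξ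
      = ηm * ξ + I0 + ∫ s in (0:ℝ)..ξ, (e s - ηm) := by
    intro ξ
    have h := intervalIntegral.integral_Iic_sub_Iic (hInt 0) (hInt ξ)
    rw [NGL]
    rw [hI0def]
    linarith [h]
  -- Lipschitz constant of e on [-x₀, x₀]
  have hcontderiv : Continuous (deriv e) := by
    have := (contDiff_succ_iff_deriv (n := 1)).1
      (by rw [show ((1:WithTop ℕ∞) + 1) = 2 by norm_num]; exact he1)
    exact this.2.2.continuous
  have hediff : Differentiable ℝ e := he1.differentiable (by norm_num)
  obtain ⟨z, hzmem, hzmax⟩ := isCompact_Icc.exists_isMaxOn (s := Set.Icc (-x₀) x₀)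
    ⟨0, by constructor <;> linarith⟩ (hcontderiv.abs.continuousOn)
  set L : ℝ := |deriv e z| with hLdef
  clear_value L
  have hL0 : 0 ≤ L := hLdef ▸ abs_nonneg _
  have habs_uIoc : ∀ (a y : ℝ), y ∈ Set.uIoc 0 a → |y| ≤ |a| := by
    intro a y hy
    rcases le_total 0 a with h | h
    · rw [Set.uIoc_of_le h] at hy
      rw [abs_of_pos hy.1, abs_of_nonneg h]; exact hy.2
    · rw [Set.uIoc_of_ge h] at hy
      rw [abs_of_nonpos hy.2, abs_of_nonpos h]; linarith [hy.1]
  have hLip : ∀ s : ℝ, |s| ≤ x₀ → |e s - e 0| ≤ L * |s| := by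
    intro s hs
    have hftc : e s - e 0 = ∫ r in (0:ℝ)..s, deriv e r :=
      (intervalIntegral.integral_deriv_eq_sub (fun y _ => hediff y)
        (hcontderiv.intervalIntegrable _ _)).symm
    rw [hftc]
    have h := intervalIntegral.norm_integral_le_of_norm_le_const (C := L)
      (f := deriv e) (a := 0) (b := s) ?_
    · simpa using h
    · intro y hy
      have hy' : |y| ≤ x₀ := le_trans (habs_uIoc s y hy) hs
      have := hzmax (abs_le.1 hy')
      rw [hLdef]
      simpa using this
  set B : ℝ := 2 * L * x₀ + t₀ * |I0| + L * x₀ ^ 2 with hBdef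
  clear_value B
  have hB0 : 0 ≤ B := by rw [hBdef]; positivity
  refine ⟨C₀ + B + 1, by linarith, ?_⟩
  intro t ht x hx
  set T : ℝ := t₀ + t with hTdef
  clear_value T
  have hut := hu t ht x
  rw [← hTdef] at hut
  have ht1 : (1:ℝ) ≤ t := ht
  have ht0 : (0:ℝ) < t := by linarith
  have hT1 : (1:ℝ) ≤ T := by rw [hTdef]; linarith
  have hsT0 : 0 < Real.sqrt T := Real.sqrt_pos.2 (by linarith)
  have hst0 : 0 < Real.sqrt t := Real.sqrt_pos.2 (by linarith)
  have hst1 : 1 ≤ Real.sqrt t := by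
    rw [show (1:ℝ) = Real.sqrt 1 by simp]; exact Real.sqrt_le_sqrt ht1
  have hsT1 : 1 ≤ Real.sqrt T := by
    rw [show (1:ℝ) = Real.sqrt 1 by simp]; exact Real.sqrt_le_sqrt hT1
  have hstT : Real.sqrt t ≤ Real.sqrt T := Real.sqrt_le_sqrt (by rw [hTdef]; linarith)
  set ξ : ℝ := x / Real.sqrt T with hξdef
  clear_value ξ
  have hξx : Real.sqrt T * ξ = x := by
    rw [hξdef]; field_simp
  have hξabs' : |ξ| ≤ x₀ / Real.sqrt t := by
    rw [hξdef, abs_div, abs_of_pos hsT0]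
    exact div_le_div₀ (by linarith) hx hst0 hstT
  have hξabs : |ξ| ≤ x₀ := by
    calc |ξ| ≤ x₀ / Real.sqrt t := hξabs'
      _ ≤ x₀ / 1 := by gcongr
      _ = x₀ := by ring
  -- modulus estimate
  set r1 : ℝ := Real.sqrt (1 - e ξ ^ 2) with hr1def
  set r2 : ℝ := Real.sqrt (1 - ηstar ^ 2) with hr2def
  clear_value r1 r2
  have hr2mem : 3 * ηstar ^ 2 < 1 := by rw [hηstar]; exact hsq 0
  have hrdiff : |r1 - r2| ≤ 2 * L * x₀ / Real.sqrt t := by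
    have h1 : |r1 - r2| ≤ |(1 - e ξ ^ 2) - (1 - ηstar ^ 2)| := by
      rw [hr1def, hr2def]
      exact sqrt_diff_le (by nlinarith [hsq ξ]) (by nlinarith)
    have h2 : |(1 - e ξ ^ 2) - (1 - ηstar ^ 2)| = |e ξ + ηstar| * |e ξ - ηstar| := by
      rw [show (1 - e ξ ^ 2) - (1 - ηstar ^ 2) = -((e ξ + ηstar) * (e ξ - ηstar)) by ring,
        abs_neg, abs_mul]
    have h3 : |e ξ + ηstar| ≤ 2 := by
      have g1 : |e ξ| ≤ 1 := by nlinarith [abs_nonneg (e ξ), sq_abs (e ξ), hsq ξ]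
      have g2 : |ηstar| ≤ 1 := by nlinarith [abs_nonneg ηstar, sq_abs ηstar]
      calc |e ξ + ηstar| ≤ |e ξ| + |ηstar| := abs_add_le _ _
        _ ≤ 2 := by linarith
    have h4 : |e ξ - ηstar| ≤ L * (x₀ / Real.sqrt t) := by
      rw [hηstar]
      calc |e ξ - e 0| ≤ L * |ξ| := hLip ξ hξabs
        _ ≤ L * (x₀ / Real.sqrt t) := by
            apply mul_le_mul_of_nonneg_left hξabs' hL0
    calc |r1 - r2| ≤ |e ξ + ηstar| * |e ξ - ηstar| := h1.trans_eq h2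
      _ ≤ 2 * (L * (x₀ / Real.sqrt t)) := by
          apply mul_le_mul h3 h4 (abs_nonneg _) (by norm_num)
      _ = 2 * L * x₀ / Real.sqrt t := by ring
  -- phase estimate
  set θ1 : ℝ := Real.sqrt T * NGL e ηm ξ with hθ1def
  set θ2 : ℝ := Real.sqrt t * φstar + ηstar * x with hθ2def
  clear_value θ1 θ2
  have hsplit : (∫ s in (0:ℝ)..ξ, (e s - ηm))
      = (∫ s in (0:ℝ)..ξ, (e s - e 0)) + (e 0 - ηm) * ξ := by
    have h1 : (fun s => e s - ηm) = fun s => (e s - e 0) + (e 0 - ηm) := by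
      funext s; ring
    rw [show (∫ s in (0:ℝ)..ξ, (e s - ηm)) = ∫ s in (0:ℝ)..ξ, ((e s - e 0) + (e 0 - ηm))
        from by rw [← h1],
      intervalIntegral.integral_add (f := fun s => e s - e 0)
        ((he1.continuous.sub continuous_const).intervalIntegrable _ _)
        (intervalIntegrable_const),
      intervalIntegral.integral_const]
    simp [smul_eq_mul]; ring
  have hθeq : θ1 - θ2 = (Real.sqrt T - Real.sqrt t) * I0
      + Real.sqrt T * (∫ s in (0:ℝ)..ξ, (e s - e 0)) := by
    rw [hθ1def, hθ2def, hNGLeq ξ, hsplit, hφ, hηstar]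
    linear_combination (e 0) * hξx
  have hTmt : Real.sqrt T - Real.sqrt t ≤ t₀ / Real.sqrt t := by
    have hkey : (Real.sqrt T - Real.sqrt t) * (Real.sqrt T + Real.sqrt t) = t₀ := by
      have e1 : Real.sqrt T ^ 2 = T := Real.sq_sqrt (by linarith)
      have e2 : Real.sqrt t ^ 2 = t := Real.sq_sqrt (by linarith)
      nlinarith
    rw [div_eq_mul_inv]
    rw [show Real.sqrt T - Real.sqrt t = t₀ / (Real.sqrt T + Real.sqrt t) from by
      field_simp; linarith [hkey], div_eq_mul_inv]
    apply mul_le_mul_of_nonneg_left _ ht₀.le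
    apply inv_anti₀ hst0
    linarith
  have hRbound : |∫ s in (0:ℝ)..ξ, (e s - e 0)| ≤ L * |ξ| * |ξ| := by
    have h := intervalIntegral.norm_integral_le_of_norm_le_const (C := L * |ξ|)
      (f := fun s => e s - e 0) (a := 0) (b := ξ) ?_
    · simpa using h
    · intro y hy
      have hy' : |y| ≤ |ξ| := habs_uIoc ξ y hy
      rw [Real.norm_eq_abs]
      calc |e y - e 0| ≤ L * |y| := hLip y (hy'.trans hξabs)
        _ ≤ L * |ξ| := mul_le_mul_of_nonneg_left hy' hL0
  have hθbound : |θ1 - θ2| ≤ (t₀ * |I0| + L * x₀ ^ 2) / Real.sqrt t := by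
    rw [hθeq]
    have h1 : |(Real.sqrt T - Real.sqrt t) * I0| ≤ (t₀ / Real.sqrt t) * |I0| := by
      rw [abs_mul]
      apply mul_le_mul_of_nonneg_right _ (abs_nonneg _)
      rw [abs_of_nonneg (by linarith)]
      exact hTmt
    have h2 : |Real.sqrt T * (∫ s in (0:ℝ)..ξ, (e s - e 0))|
        ≤ L * x₀ ^ 2 / Real.sqrt t := by
      rw [abs_mul, abs_of_pos hsT0]
      calc Real.sqrt T * |∫ s in (0:ℝ)..ξ, (e s - e 0)|
          ≤ Real.sqrt T * (L * |ξ| * |ξ|) := by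
            apply mul_le_mul_of_nonneg_left hRbound hsT0.le
        _ = (L * |ξ|) * (Real.sqrt T * |ξ|) := by ring
        _ ≤ (L * (x₀ / Real.sqrt t)) * x₀ := by
            have g1 : Real.sqrt T * |ξ| ≤ x₀ := by
              have : Real.sqrt T * |ξ| = |Real.sqrt T * ξ| := by
                rw [abs_mul, abs_of_pos hsT0]
              rw [this, hξx]
              exact hx
            apply mul_le_mul (mul_le_mul_of_nonneg_left hξabs' hL0) g1 (by positivity) (by positivity)
        _ = L * x₀ ^ 2 / Real.sqrt t := by ring
    calc |(Real.sqrt T - Real.sqrt t) * I0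
          + Real.sqrt T * (∫ s in (0:ℝ)..ξ, (e s - e 0))|
        ≤ |(Real.sqrt T - Real.sqrt t) * I0|
          + |Real.sqrt T * (∫ s in (0:ℝ)..ξ, (e s - e 0))| := abs_add_le _ _
      _ ≤ (t₀ / Real.sqrt t) * |I0| + L * x₀ ^ 2 / Real.sqrt t := add_le_add h1 h2
      _ = (t₀ * |I0| + L * x₀ ^ 2) / Real.sqrt t := by ring
  -- complex assembly
  have hE1 : ‖Complex.exp (Complex.I * (θ1:ℂ))‖ = 1 := by
    rw [Complex.norm_exp]
    simp
  have hr2le1 : r2 ≤ 1 := by rw [hr2def]; exact Real.sqrt_le_one.2 (by nlinarith)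
  have hr20 : 0 ≤ r2 := hr2def ▸ Real.sqrt_nonneg _
  have hUT : Utilde e ηm T x = (r1:ℂ) * Complex.exp (Complex.I * (θ1:ℂ)) := by
    rw [Utilde, hr1def, hθ1def, hξdef]
  have hD : ‖Utilde e ηm T x
      - (r2:ℂ) * Complex.exp (Complex.I * (θ2:ℂ))‖ ≤ |r1 - r2| + |θ1 - θ2| := by
    rw [hUT]
    calc ‖(r1:ℂ) * Complex.exp (Complex.I * (θ1:ℂ))
          - (r2:ℂ) * Complex.exp (Complex.I * (θ2:ℂ))‖
        = ‖((r1 - r2 : ℝ):ℂ) * Complex.exp (Complex.I * (θ1:ℂ))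
          + (r2:ℂ) * (Complex.exp (Complex.I * (θ1:ℂ))
            - Complex.exp (Complex.I * (θ2:ℂ)))‖ := by
          congr 1; push_cast; ring
      _ ≤ ‖((r1 - r2 : ℝ):ℂ) * Complex.exp (Complex.I * (θ1:ℂ))‖
          + ‖(r2:ℂ) * (Complex.exp (Complex.I * (θ1:ℂ))
            - Complex.exp (Complex.I * (θ2:ℂ)))‖ := norm_add_le _ _
      _ = |r1 - r2| + |r2| * ‖Complex.exp (Complex.I * (θ1:ℂ))
            - Complex.exp (Complex.I * (θ2:ℂ))‖ := by
          rw [norm_mul, norm_mul, hE1, Complex.norm_real, Complex.norm_real,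
            Real.norm_eq_abs, Real.norm_eq_abs, mul_one]
      _ ≤ |r1 - r2| + 1 * |θ1 - θ2| := by
          apply add_le_add_right
          apply mul_le_mul (by rw [abs_of_nonneg hr20]; exact hr2le1)
            (norm_cexp_sub_cexp θ1 θ2) (norm_nonneg _) (by norm_num)
      _ = |r1 - r2| + |θ1 - θ2| := by ring
  -- final assembly
  have hrp0 : (0:ℝ) < t ^ (-(ν / 4)) := Real.rpow_pos_of_pos ht0 _
  have hrp : 1 / Real.sqrt t ≤ t ^ (-(ν / 4)) := by
    have h1 : 1 / Real.sqrt t = t ^ (-(1/2) : ℝ) := by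
      rw [Real.rpow_neg ht0.le, Real.sqrt_eq_rpow, one_div]
    rw [h1]
    exact Real.rpow_le_rpow_of_exponent_le ht1 (by linarith [hν.2])
  calc ‖u t x - (r2:ℂ) * Complex.exp (Complex.I * (θ2:ℂ))‖
      = ‖(u t x - Utilde e ηm T x) + (Utilde e ηm T x
          - (r2:ℂ) * Complex.exp (Complex.I * (θ2:ℂ)))‖ := by ring_nf
    _ ≤ ‖u t x - Utilde e ηm T x‖ + ‖Utilde e ηm T x
          - (r2:ℂ) * Complex.exp (Complex.I * (θ2:ℂ))‖ := norm_add_le _ _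
    _ ≤ C₀ * t ^ (-(ν / 4)) + (|r1 - r2| + |θ1 - θ2|) :=
        add_le_add hut hD
    _ ≤ C₀ * t ^ (-(ν / 4)) + (2 * L * x₀ / Real.sqrt t
          + (t₀ * |I0| + L * x₀ ^ 2) / Real.sqrt t) := by
        apply add_le_add_right (add_le_add hrdiff hθbound)
    _ = C₀ * t ^ (-(ν / 4)) + B * (1 / Real.sqrt t) := by rw [hBdef]; ring
    _ ≤ C₀ * t ^ (-(ν / 4)) + B * t ^ (-(ν / 4)) := by
        apply add_le_add_right
        apply mul_le_mul_of_nonneg_left hrp (by positivity)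
    _ ≤ (C₀ + B + 1) * t ^ (-(ν / 4)) := by nlinarith [hrp0]
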